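/- The squared Wasserstein-2 distance between Gaussians, defined as W₂(ρ₀,ρ₁)² = ‖m₀−m₁‖² + trace(Σ₀ + Σ₁ − 2(Σ₀^{1/2}Σ₁Σ₀^{1/2})^{1/2}), is nonnegative, i.e., trace(Σ₀ + Σ₁) ≥ 2·trace((Σ₀^{1/2}Σ₁Σ₀^{1/2})^{1/2}) for positive semidefinite Σ₀, Σ₁. -/

import Mathlib

set_option autoImplicit false
open Matrix
noncomputable section

namespace Matrix.PosSemidef

open scoped ComplexOrder

/-- The old Mathlib (Dec 2024) `Matrix.PosSemidef.sqrt`, removed since; restated verbatim. -/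
def sqrt {n 𝕜 : Type*} [Fintype n] [RCLike 𝕜] [DecidableEq n] {A : Matrix n n 𝕜}
    (hA : PosSemidef A) : Matrix n n 𝕜 :=
  hA.1.eigenvectorUnitary.1 * diagonal ((↑) ∘ (fun x => Real.sqrt x) ∘ hA.1.eigenvalues) *
    (star hA.1.eigenvectorUnitary : Matrix n n 𝕜)

lemma posSemidef_sqrt {n 𝕜 : Type*} [Fintype n] [RCLike 𝕜] [DecidableEq n] {A : Matrix n n 𝕜}
    (hA : PosSemidef A) : PosSemidef hA.sqrt := by
  apply PosSemidef.mul_mul_conjTranspose_same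
  refine posSemidef_diagonal_iff.mpr fun i ↦ ?_
  rw [Function.comp_apply, RCLike.nonneg_iff]
  constructor
  · simp only [Function.comp_apply, RCLike.ofReal_re]
    exact Real.sqrt_nonneg _
  · simp only [Function.comp_apply, RCLike.ofReal_im]

lemma sqrt_mul_self {n 𝕜 : Type*} [Fintype n] [RCLike 𝕜] [DecidableEq n] {A : Matrix n n 𝕜}
    (hA : PosSemidef A) : hA.sqrt * hA.sqrt = A := by
  let C : Matrix n n 𝕜 := hA.1.eigenvectorUnitary
  let E := diagonal ((↑) ∘ Real.sqrt ∘ hA.1.eigenvalues : n → 𝕜)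
  suffices C * (E * (star C * C) * E) * star C = A by
    rw [Matrix.PosSemidef.sqrt]
    simpa only [← mul_assoc] using this
  have : E * E = diagonal ((↑) ∘ hA.1.eigenvalues) := by
    rw [diagonal_mul_diagonal]
    congr! with v
    simp [← pow_two, ← RCLike.ofReal_pow, Real.sq_sqrt (hA.eigenvalues_nonneg v)]
  have hs := hA.1.spectral_theorem
  rw [Unitary.conjStarAlgAut_apply] at hs
  simp only [C, Unitary.coe_star_mul_self, Matrix.mul_one, this]
  exact hs.symm

end Matrix.PosSemidef

/-- The middle matrix `Σ₀^{1/2} Σ₁ Σ₀^{1/2}` is positive semidefinite (PSD version). -/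
theorem midPosSemidef' {n : ℕ} {S0 S1 : Matrix (Fin n) (Fin n) ℝ}
    (h0 : S0.PosSemidef) (h1 : S1.PosSemidef) :
    (h0.sqrt * S1 * h0.sqrt).PosSemidef := by
  have h := h1.mul_mul_conjTranspose_same h0.sqrt
  rwa [h0.posSemidef_sqrt.isHermitian] at h

section Aux

variable {n : ℕ}

private lemma inner_eq_dot (x y : EuclideanSpace ℝ (Fin n)) :
    (inner ℝ x y : ℝ) = ⇑x ⬝ᵥ ⇑y := by
  simp [EuclideanSpace.inner_eq_star_dotProduct, dotProduct, mul_comm]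

private lemma mulVec_dot (N : Matrix (Fin n) (Fin n) ℝ) (x z : Fin n → ℝ) :
    (N *ᵥ x) ⬝ᵥ z = x ⬝ᵥ (Nᵀ *ᵥ z) := by
  rw [dotProduct_mulVec, vecMul_transpose]

private lemma dot_amgm (x y : Fin n → ℝ) :
    x ⬝ᵥ y ≤ (x ⬝ᵥ x + y ⬝ᵥ y) / 2 := by
  have h : 0 ≤ (x - y) ⬝ᵥ (x - y) :=
    Finset.sum_nonneg fun i _ => mul_self_nonneg _
  have e : (x - y) ⬝ᵥ (x - y) = x ⬝ᵥ x - 2 * (x ⬝ᵥ y) + y ⬝ᵥ y := by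
    simp only [sub_dotProduct, dotProduct_sub, dotProduct_comm y x]
    ring
  linarith [e ▸ h]

private theorem key {S0 S1 : Matrix (Fin n) (Fin n) ℝ}
    (h0 : S0.PosSemidef) (h1 : S1.PosSemidef) :
    2 * ((midPosSemidef' h0 h1).sqrt).trace ≤ S0.trace + S1.trace := by
  classical
  set A := h0.sqrt with hAdef
  set B := h1.sqrt with hBdef
  have hAsymm : Aᵀ = A := by simpa using h0.posSemidef_sqrt.isHermitian.eq
  have hBsymm : Bᵀ = B := by simpa using h1.posSemidef_sqrt.isHermitian.eq
  have hAA : A * A = S0 := h0.sqrt_mul_self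
  have hBB : B * B = S1 := h1.sqrt_mul_self
  set hM := midPosSemidef' h0 h1 with hMdef
  set ν : Fin n → ℝ := hM.1.eigenvalues with hνdef
  have hν0 : ∀ i, 0 ≤ ν i := hM.eigenvalues_nonneg
  set u : Fin n → (Fin n → ℝ) := fun i => ⇑(hM.1.eigenvectorBasis i) with hudef
  have hMu : ∀ i, (A * S1 * A) *ᵥ u i = ν i • u i := fun i => hM.1.mulVec_eigenvectorBasis i
  have huon : ∀ i j, u i ⬝ᵥ u j = if i = j then 1 else 0 := by
    intro i j
    rw [← inner_eq_dot]
    exact orthonormal_iff_ite.mp hM.1.eigenvectorBasis.orthonormal i j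
  -- trace of the square root
  have htr : hM.sqrt.trace = ∑ i, Real.sqrt (ν i) := by
    rw [Matrix.PosSemidef.sqrt, Matrix.trace_mul_comm, ← Matrix.mul_assoc,
      Unitary.coe_star_mul_self, Matrix.one_mul, Matrix.trace_diagonal]
    simp
    rfl
  set w : Fin n → (Fin n → ℝ) := fun i => (B * A) *ᵥ u i with hwdef
  have hww : ∀ i j, w i ⬝ᵥ w j = ν j * (if i = j then 1 else 0) := by
    intro i j
    rw [hwdef]
    simp only
    rw [mulVec_dot, Matrix.transpose_mul, hAsymm, hBsymm, Matrix.mulVec_mulVec,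
      ← Matrix.mul_assoc]
    have : A * B * B * A = A * S1 * A := by rw [Matrix.mul_assoc A B B, hBB]
    rw [this, hMu, dotProduct_smul, huon, smul_eq_mul]
  set lam : Fin n → ℝ := fun i => Real.sqrt (ν i) with hlamdef
  have hlam0 : ∀ i, 0 ≤ lam i := fun i => Real.sqrt_nonneg _
  have hlamsq : ∀ i, lam i * lam i = ν i := fun i => Real.mul_self_sqrt (hν0 i)
  set v : Fin n → (Fin n → ℝ) := fun i => (lam i)⁻¹ • w i with hvdef
  have hvv : ∀ i j, v i ⬝ᵥ v j =
      if i = j then (if ν i = 0 then 0 else 1) else 0 := by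
    intro i j
    rw [hvdef]
    simp only
    rw [smul_dotProduct, dotProduct_smul, hww i j, smul_eq_mul, smul_eq_mul]
    by_cases hij : i = j
    · subst hij
      simp only [if_pos rfl]
      by_cases h0' : ν i = 0
      · simp [h0']
      · rw [if_neg h0', ← hlamsq i]
        have hl : lam i ≠ 0 := fun h => h0' (by rw [← hlamsq i, h, mul_zero])
        field_simp
    · simp [hij]
  -- lam i = ⟨A u i, B v i⟩
  have hlam_eq : ∀ i, lam i = (A *ᵥ u i) ⬝ᵥ (B *ᵥ v i) := by
    intro i
    have : (A *ᵥ u i) ⬝ᵥ (B *ᵥ v i) = (lam i)⁻¹ * ν i := by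
      rw [hvdef]
      simp only [Matrix.mulVec_smul, dotProduct_smul, smul_eq_mul]
      congr 1
      rw [hwdef]
      simp only [Matrix.mulVec_mulVec, mulVec_dot, hAsymm, Matrix.mulVec_mulVec,
        ← Matrix.mul_assoc]
      have : A * B * B * A = A * S1 * A := by rw [Matrix.mul_assoc A B B, hBB]
      rw [this, hMu, dotProduct_smul, huon, smul_eq_mul, if_pos rfl, mul_one]
    rw [this]
    by_cases h0' : ν i = 0
    · simp [hlamdef, h0']
    · have hl : lam i ≠ 0 := fun h => h0' (by rw [← hlamsq i, h, mul_zero])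
      rw [← hlamsq i]
      field_simp
  -- sum of ⟨u i, S0 u i⟩ is trace S0
  have htrS0 : ∑ i, (A *ᵥ u i) ⬝ᵥ (A *ᵥ u i) = S0.trace := by
    have h1' : ∀ i, (A *ᵥ u i) ⬝ᵥ (A *ᵥ u i) = u i ⬝ᵥ (S0 *ᵥ u i) := by
      intro i
      rw [mulVec_dot, hAsymm, Matrix.mulVec_mulVec, hAA]
    simp only [h1']
    set U := hM.1.eigenvectorUnitary with hUdef
    have hdiag : ∀ i, u i ⬝ᵥ (S0 *ᵥ u i) = (star (U : Matrix (Fin n) (Fin n) ℝ) * S0 * U) i i := by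
      intro i
      simp only [Matrix.mul_apply, Matrix.star_apply, dotProduct, Matrix.mulVec,
        dotProduct, Finset.sum_mul, Finset.mul_sum]
      rw [Finset.sum_comm]
      refine Finset.sum_congr rfl fun j _ => Finset.sum_congr rfl fun k _ => ?_
      have hU : (U : Matrix (Fin n) (Fin n) ℝ) j i = u i j := rfl
      have hU2 : (U : Matrix (Fin n) (Fin n) ℝ) k i = u i k := rfl
      rw [hU, hU2, star_trivial]
      ring
    simp only [hdiag]
    have : (star (U : Matrix (Fin n) (Fin n) ℝ) * S0 * U).trace = S0.trace := by
      rw [Matrix.trace_mul_cycle,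
        show (U : Matrix (Fin n) (Fin n) ℝ) * star (U : Matrix (Fin n) (Fin n) ℝ) = 1 from
          Matrix.mem_unitaryGroup_iff.mp U.2, Matrix.one_mul]
    rw [← this, Matrix.trace]
    rfl
  -- Bessel: sum of ‖B v i‖² is at most trace S1
  have htrS1 : ∑ i, (B *ᵥ v i) ⬝ᵥ (B *ᵥ v i) ≤ S1.trace := by
    set b : Fin n → (Fin n → ℝ) := fun j => fun k => B k j with hbdef
    have hrow : ∀ i j, (B *ᵥ v i) j = v i ⬝ᵥ b j := by
      intro i j
      simp only [Matrix.mulVec, dotProduct, hbdef]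
      refine Finset.sum_congr rfl fun k _ => ?_
      have : B j k = B k j := by
        rw [← congrFun (congrFun hBsymm j) k, Matrix.transpose_apply]
      rw [this]; ring
    have hexpand : ∀ i, (B *ᵥ v i) ⬝ᵥ (B *ᵥ v i) = ∑ j, (v i ⬝ᵥ b j) ^ 2 := by
      intro i
      simp only [dotProduct, hrow]
      exact Finset.sum_congr rfl fun j _ => (sq _).symm
    simp only [hexpand]
    rw [Finset.sum_comm]
    have hbound : ∀ j, ∑ i, (v i ⬝ᵥ b j) ^ 2 ≤ b j ⬝ᵥ b j := by
      intro j
      -- orthonormal family on the subtype of nonzero eigenvalues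
      set V : {i // ν i ≠ 0} → EuclideanSpace ℝ (Fin n) :=
        fun i => (WithLp.equiv 2 (Fin n → ℝ)).symm (v i.1) with hVdef
      have hVon : Orthonormal ℝ V := by
        rw [orthonormal_iff_ite]
        intro i j
        have : (inner ℝ (V i) (V j) : ℝ) = v i.1 ⬝ᵥ v j.1 := inner_eq_dot _ _
        rw [this, hvv]
        rcases eq_or_ne i j with h | h
        · subst h; simp [i.2]
        · have : i.1 ≠ j.1 := fun hh => h (Subtype.ext hh)
          simp [this, h]
      have hzero : ∀ i, ν i = 0 → (v i ⬝ᵥ b j) ^ 2 = 0 := by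
        intro i h0'
        have : lam i = 0 := by rw [hlamdef]; simp [h0']
        have : v i = 0 := by rw [hvdef]; simp [this]
        rw [this]
        simp
      have hsum : ∑ i, (v i ⬝ᵥ b j) ^ 2 = ∑ i : {i // ν i ≠ 0}, (v i.1 ⬝ᵥ b j) ^ 2 := by
        rw [← Finset.sum_filter_of_ne (p := fun i => ν i ≠ 0)
          (fun i _ hne => by by_contra h; exact hne (hzero i h))]
        exact Finset.sum_subtype _ (fun i => by simp) _
      rw [hsum]
      set x : EuclideanSpace ℝ (Fin n) := (WithLp.equiv 2 (Fin n → ℝ)).symm (b j) with hxdef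
      have hBessel := hVon.sum_inner_products_le (s := Finset.univ) x
      have hinner : ∀ i : {i // ν i ≠ 0}, ‖(inner ℝ (V i) x : ℝ)‖ ^ 2 = (v i.1 ⬝ᵥ b j) ^ 2 := by
        intro i
        rw [Real.norm_eq_abs, sq_abs, inner_eq_dot]
        rfl
      have hnorm : ‖x‖ ^ 2 = b j ⬝ᵥ b j := by
        rw [← real_inner_self_eq_norm_sq, inner_eq_dot]
        rfl
      calc ∑ i : {i // ν i ≠ 0}, (v i.1 ⬝ᵥ b j) ^ 2
          = ∑ i : {i // ν i ≠ 0}, ‖(inner ℝ (V i) x : ℝ)‖ ^ 2 :=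
            Finset.sum_congr rfl fun i _ => (hinner i).symm
        _ ≤ ‖x‖ ^ 2 := hBessel
        _ = b j ⬝ᵥ b j := hnorm
    have hfinal : ∑ j, ∑ i, (v i ⬝ᵥ b j) ^ 2 ≤ ∑ j, b j ⬝ᵥ b j :=
      Finset.sum_le_sum fun j _ => hbound j
    refine hfinal.trans_eq ?_
    rw [Matrix.trace]
    refine Finset.sum_congr rfl fun j _ => ?_
    rw [← hBB]
    simp only [Matrix.diag_apply, Matrix.mul_apply, dotProduct, hbdef]
    refine Finset.sum_congr rfl fun k _ => ?_
    have : B j k = B k j := by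
      rw [← congrFun (congrFun hBsymm j) k, Matrix.transpose_apply]
    rw [this]
  -- combine
  rw [htr, Finset.mul_sum]
  have hstep : ∀ i, 2 * lam i ≤
      (A *ᵥ u i) ⬝ᵥ (A *ᵥ u i) + (B *ᵥ v i) ⬝ᵥ (B *ᵥ v i) := by
    intro i
    have := dot_amgm (A *ᵥ u i) (B *ᵥ v i)
    rw [← hlam_eq i] at this
    linarith
  calc ∑ i, 2 * lam i
      ≤ ∑ i, ((A *ᵥ u i) ⬝ᵥ (A *ᵥ u i) + (B *ᵥ v i) ⬝ᵥ (B *ᵥ v i)) :=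
        Finset.sum_le_sum fun i _ => hstep i
    _ = (∑ i, (A *ᵥ u i) ⬝ᵥ (A *ᵥ u i)) + ∑ i, (B *ᵥ v i) ⬝ᵥ (B *ᵥ v i) :=
        Finset.sum_add_distrib
    _ ≤ S0.trace + S1.trace := by
        rw [htrS0]
        exact add_le_add_right htrS1 _

end Aux

/-- `trace(Σ₀ + Σ₁) ≥ 2·trace((Σ₀^{1/2}Σ₁Σ₀^{1/2})^{1/2})` for PSD `Σ₀, Σ₁`,
i.e. the squared Gaussian Wasserstein-2 distance is nonnegative. -/
theorem stmt2 {n : ℕ} (S0 S1 : Matrix (Fin n) (Fin n) ℝ)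
    (h0 : S0.PosSemidef) (h1 : S1.PosSemidef) (m0 m1 : EuclideanSpace ℝ (Fin n)) :
    (0 ≤ ‖m0 - m1‖ ^ 2 + (S0 + S1 - 2 • (midPosSemidef' h0 h1).sqrt).trace) ∧
    2 * ((midPosSemidef' h0 h1).sqrt).trace ≤ (S0 + S1).trace := by
  have hkey := key h0 h1
  have htr : (S0 + S1).trace = S0.trace + S1.trace := Matrix.trace_add _ _
  constructor
  · have h2 : (S0 + S1 - 2 • (midPosSemidef' h0 h1).sqrt).trace =
        (S0 + S1).trace - (2 • (midPosSemidef' h0 h1).sqrt).trace := Matrix.trace_sub _ _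
    have h3 : (2 • (midPosSemidef' h0 h1).sqrt).trace =
        2 * ((midPosSemidef' h0 h1).sqrt).trace := by
      rw [Matrix.trace_smul]
      simp
    have h4 : (0:ℝ) ≤ ‖m0 - m1‖ ^ 2 := sq_nonneg _
    rw [h2, h3, htr]
    linarith
  · rw [htr]; exact hkey
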